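/- Let λ > 1, k_n = λ^n, and ρ > 0. Suppose r = (r_i)_{i≥1} is a real sequence with Σ_{i≥1} |r_i| < ∞ satisfying ρ r₁ = k₁²(r₂ − r₁) and ρ r_i = k_i²(r_{i+1} − r_i) − k_{i−1}²(r_i − r_{i−1}) for all i ≥ 2. Then r_i = 0 for all i ≥ 1. -/

import Mathlib

lemma stmt2_aux (lam ρ : ℝ) (hlam : 1 < lam) (hρ : 0 < ρ) (r : ℕ → ℝ)
    (hsum : Summable fun i : ℕ => |r (i + 1)|)
    (h1 : ρ * r 1 = lam ^ 2 * (r 2 - r 1))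
    (hrec : ∀ i : ℕ, 2 ≤ i →
      ρ * r i = lam ^ (2 * i) * (r (i + 1) - r i)
        - lam ^ (2 * (i - 1)) * (r i - r (i - 1))) :
    ¬ (0 < r 1) := by
  intro hr1
  have hlam0 : (0:ℝ) < lam := lt_trans one_pos hlam
  have key : ∀ i : ℕ, lam ^ (2*(i+1)) * (r (i+2) - r (i+1))
      = ρ * ∑ j ∈ Finset.range (i+1), r (j+1) := by
    intro i
    induction i with
    | zero => simpa using h1.symm
    | succ n ih =>
      have h := hrec (n+2) (by omega)
      have hn : n + 2 - 1 = n + 1 := by omega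
      rw [hn] at h
      rw [Finset.sum_range_succ, show n + 1 + 1 = n + 2 from rfl]
      have h3 : lam ^ (2*(n+2)) * (r (n+3) - r (n+2))
          = ρ * r (n+2) + lam ^ (2*(n+1)) * (r (n+2) - r (n+1)) := by linarith
      rw [show n + 2 + 1 = n + 3 from rfl, h3, ih]; ring
  have mono : ∀ i : ℕ, ∀ j ≤ i, r 1 ≤ r (j+1) := by
    intro i
    induction i with
    | zero => intro j hj; interval_cases j; simp
    | succ n ih =>
      intro j hj
      rcases Nat.lt_succ_iff_lt_or_eq.mp (Nat.lt_succ_of_le hj) with h | h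
      · exact ih j (Nat.lt_succ_iff.mp h)
      · subst h
        have hS : 0 < ∑ k ∈ Finset.range (n+1), r (k+1) := by
          apply Finset.sum_pos
          · intro k hk
            exact lt_of_lt_of_le hr1 (ih k (Nat.lt_succ_iff.mp (Finset.mem_range.mp hk)))
          · exact ⟨0, Finset.mem_range.mpr (Nat.succ_pos n)⟩
        have hk := key n
        have hpow : (0:ℝ) < lam ^ (2*(n+1)) := pow_pos hlam0 _
        have h2 : 0 < lam ^ (2*(n+1)) * (r (n+2) - r (n+1)) := by
          rw [hk]; exact mul_pos hρ hS
        have hd : 0 < r (n+2) - r (n+1) := by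
          by_contra hcon
          push_neg at hcon
          nlinarith
        have := ih n le_rfl
        linarith
  have htend : Filter.Tendsto (fun i : ℕ => |r (i + 1)|) Filter.atTop (nhds 0) :=
    hsum.tendsto_atTop_zero
  have hle : r 1 ≤ 0 :=
    ge_of_tendsto' htend (fun i => le_trans (mono i i le_rfl) (le_abs_self _))
  linarith

theorem stmt_2 (lam ρ : ℝ) (hlam : 1 < lam) (hρ : 0 < ρ) (r : ℕ → ℝ)
    (hsum : Summable fun i : ℕ => |r (i + 1)|)
    (h1 : ρ * r 1 = lam ^ 2 * (r 2 - r 1))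
    (hrec : ∀ i : ℕ, 2 ≤ i →
      ρ * r i = lam ^ (2 * i) * (r (i + 1) - r i)
        - lam ^ (2 * (i - 1)) * (r i - r (i - 1))) :
    ∀ i : ℕ, 1 ≤ i → r i = 0 := by
  have hnpos : ¬ (0 < r 1) := stmt2_aux lam ρ hlam hρ r hsum h1 hrec
  have hnneg : ¬ (r 1 < 0) := by
    intro h
    have := stmt2_aux lam ρ hlam hρ (fun i => -(r i))
      (by simpa using hsum.abs) -- fix below
      (by linarith)
      (by intro i hi; have := hrec i hi; linarith)
    exact this (by linarith)
  have hr1 : r 1 = 0 := le_antisymm (not_lt.mp hnpos) (not_lt.mp hnneg)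
  have hr2 : r 2 = 0 := by
    have hl2 : (0:ℝ) < lam ^ 2 := pow_pos (lt_trans one_pos hlam) 2
    have := h1
    rw [hr1] at this
    nlinarith
  have pair : ∀ i : ℕ, r (i+1) = 0 ∧ r (i+2) = 0 := by
    intro i
    induction i with
    | zero => exact ⟨hr1, hr2⟩
    | succ n ih =>
      refine ⟨ih.2, ?_⟩
      have h := hrec (n+2) (by omega)
      have hn : n + 2 - 1 = n + 1 := by omega
      rw [hn, ih.1, ih.2] at h
      have hl : (0:ℝ) < lam ^ (2*(n+2)) := pow_pos (lt_trans one_pos hlam) _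
      have : lam ^ (2*(n+2)) * r (n+2+1) = 0 := by linarith
      have := (mul_eq_zero.mp this).resolve_left (ne_of_gt hl)
      simpa using this
  intro i hi
  obtain ⟨j, rfl⟩ : ∃ j, i = j + 1 := ⟨i - 1, by omega⟩
  exact (pair j).1
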